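/- Let {0} = Λ₀ ⊂ Λ₁ ⊂ ⋯ ⊂ Λ_k = Λ be a filtration of a lattice Λ by pure sublattices, and for 1 ≤ i ≤ k let Q_i = Λ_i/Λ_{i−1} denote the quotient lattice, i.e. the image of Λ_i under the orthogonal projection onto the orthogonal complement of span(Λ_{i−1}). Then for every target t ∈ span(Λ) there exists a lattice vector x ∈ Λ such that ‖x − t‖² ≤ Σ_{i=1}^k μ(Q_i)². -/

import Mathlib

open scoped RealInnerProductSpace
open Metric

noncomputable section

variable {E : Type*} [NormedAddCommGroup E] [InnerProductSpace ℝ E] [FiniteDimensional ℝ E]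

/-- `L ⊆ E` is a lattice of rank `n`: it is generated (over `ℤ`) by `n`
`ℝ`-linearly independent vectors. -/
def IsLatticeOfRank (L : Submodule ℤ E) (n : ℕ) : Prop :=
  ∃ b : Fin n → E, LinearIndependent ℝ b ∧ L = Submodule.span ℤ (Set.range b)

/-- The real span of a lattice. -/
def latSpan (L : Submodule ℤ E) : Submodule ℝ E := Submodule.span ℝ (L : Set E)

/-- The covering radius of a lattice, computed inside its real span. -/
def covRad (L : Submodule ℤ E) : ℝ :=
  ⨆ x : latSpan L, infDist (x : E) (L : Set E)

/-- `L'` is a pure sublattice of `L`: the quotient is torsion-free. -/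
def IsPureIn (L' L : Submodule ℤ E) : Prop :=
  L' ≤ L ∧ ∀ v ∈ L, ∀ m : ℤ, m ≠ 0 → m • v ∈ L' → v ∈ L'

/-- Orthogonal projection of `E` onto the orthogonal complement of the span
of `L'`, as a `ℤ`-linear endomorphism of `E`. -/
def projPerp (L' : Submodule ℤ E) : E →ₗ[ℤ] E :=
  ((latSpan L')ᗮ.subtype.comp (Submodule.orthogonalProjection (latSpan L')ᗮ).toLinearMap).restrictScalars ℤ

/-- The quotient lattice `L/L'`, realized as the image of `L` under the
orthogonal projection onto the orthogonal complement of the span of `L'`. -/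
def quotLat (L L' : Submodule ℤ E) : Submodule ℤ E := L.map (projPerp L')

/-! ### Auxiliary lemmas -/

lemma fg_of_le_fg {M N : Submodule ℤ E} (h : N ≤ M) (hM : M.FG) : N.FG := by
  have : IsNoetherian ℤ M := isNoetherian_of_fg_of_noetherian M hM
  have h1 : (N.comap M.subtype).FG := IsNoetherian.noetherian _
  have h2 := h1.map M.subtype
  rwa [Submodule.map_comap_subtype, inf_eq_right.mpr h] at h2

/-- The ℝ-linear version of `projPerp`. -/
def projPerpR (L' : Submodule ℤ E) : E →ₗ[ℝ] E :=
  (latSpan L')ᗮ.subtype.comp (Submodule.orthogonalProjection (latSpan L')ᗮ).toLinearMap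

lemma projPerp_eq (L' : Submodule ℤ E) (v : E) : projPerp L' v = projPerpR L' v := rfl

lemma projPerp_mem_orth (L' : Submodule ℤ E) (v : E) : projPerp L' v ∈ (latSpan L')ᗮ :=
  SetLike.coe_mem _

lemma exists_covRad_bound (M : Submodule ℤ E) (hM : M.FG) :
    ∃ C : ℝ, ∀ x ∈ latSpan M, infDist x (M : Set E) ≤ C := by
  obtain ⟨s, hs⟩ := hM
  refine ⟨∑ v ∈ s, ‖v‖, fun x hx => ?_⟩
  have hx' : x ∈ Submodule.span ℝ (s : Set E) := by
    rw [latSpan, ← hs, Submodule.span_span_of_tower] at hx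
    exact hx
  obtain ⟨f, -, hf⟩ := Submodule.mem_span_finset.mp hx'
  set z : E := ∑ v ∈ s, ((⌊f v⌋ : ℝ)) • v with hz
  have hzM : z ∈ M := by
    rw [← hs]
    refine Submodule.sum_mem _ fun v hv => ?_
    rw [Int.cast_smul_eq_zsmul ℝ]
    exact Submodule.smul_mem _ _ (Submodule.subset_span hv)
  refine le_trans (Metric.infDist_le_dist_of_mem hzM) ?_
  rw [dist_eq_norm, ← hf]
  have hxz : (∑ v ∈ s, f v • v) - z = ∑ v ∈ s, (Int.fract (f v)) • v := by
    rw [hz, ← Finset.sum_sub_distrib]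
    exact Finset.sum_congr rfl fun v _ => by rw [← sub_smul, Int.fract]
  rw [hxz]
  refine le_trans (norm_sum_le _ _) (Finset.sum_le_sum fun v _ => ?_)
  rw [norm_smul, Real.norm_eq_abs, abs_of_nonneg (Int.fract_nonneg _)]
  nlinarith [Int.fract_lt_one (f v), Int.fract_nonneg (f v), norm_nonneg v]

lemma infDist_le_covRad {M : Submodule ℤ E} (hM : M.FG) {x : E} (hx : x ∈ latSpan M) :
    infDist x (M : Set E) ≤ covRad M := by
  obtain ⟨C, hC⟩ := exists_covRad_bound M hM
  exact le_ciSup (f := fun y : latSpan M => infDist (y : E) (M : Set E))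
    ⟨C, by rintro _ ⟨y, rfl⟩; exact hC y y.2⟩ ⟨x, hx⟩

lemma mem_latSpan_quotLat (L L' : Submodule ℤ E) {t : E} (ht : t ∈ latSpan L) :
    projPerp L' t ∈ latSpan (quotLat L L') := by
  have h1 : (quotLat L L' : Set E) = projPerpR L' '' (L : Set E) := rfl
  rw [latSpan, h1, Submodule.span_image]
  exact Submodule.mem_map_of_mem ht

lemma aux_key (k : ℕ) (Lc : ℕ → Submodule ℤ E) (h0 : Lc 0 = ⊥)
    (hmono : ∀ i, Lc i ≤ Lc (i + 1)) (hfg : ∀ i, (Lc i).FG) :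
    ∀ t ∈ latSpan (Lc k), ∀ ε > 0, ∃ x ∈ Lc k,
      ‖x - t‖ ^ 2 ≤ ∑ i ∈ Finset.range k, covRad (quotLat (Lc (i + 1)) (Lc i)) ^ 2 + ε := by
  induction k with
  | zero =>
    intro t ht ε hε
    rw [h0] at ht ⊢
    rw [latSpan] at ht
    simp only [Submodule.bot_coe, Submodule.span_zero_singleton, Submodule.mem_bot] at ht
    subst ht
    exact ⟨0, Submodule.zero_mem _, by simpa using hε.le⟩
  | succ k ih =>
    intro t ht ε hε
    set W := latSpan (Lc k) with hW
    set Q := quotLat (Lc (k + 1)) (Lc k) with hQ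
    have hQfg : Q.FG := (hfg (k + 1)).map _
    set c := covRad Q with hc
    have hπt : projPerp (Lc k) t ∈ latSpan Q := mem_latSpan_quotLat _ _ ht
    have h1 : infDist (projPerp (Lc k) t) (Q : Set E) ≤ c := infDist_le_covRad hQfg hπt
    have hc0 : 0 ≤ c := le_trans Metric.infDist_nonneg h1
    set ε₁ := min 1 (ε / (2 * (2 * c + 1))) with hε₁def
    have hε₁pos : 0 < ε₁ := lt_min one_pos (by positivity)
    have hQne : (Q : Set E).Nonempty := ⟨0, Q.zero_mem⟩
    obtain ⟨q, hqQ, hdq⟩ := (Metric.infDist_lt_iff hQne).mp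
      (lt_of_le_of_lt h1 (lt_add_of_pos_right c hε₁pos))
    obtain ⟨x₀, hx₀L, rfl⟩ := Submodule.mem_map.mp hqQ
    set s : E := -(Submodule.orthogonalProjection W (x₀ - t) : E) with hs
    have hsW : s ∈ W := Submodule.neg_mem _ (SetLike.coe_mem _)
    obtain ⟨y, hyL, hy⟩ := ih s hsW (ε / 2) (by linarith)
    refine ⟨x₀ + y, Submodule.add_mem _ hx₀L (hmono k hyL), ?_⟩
    have h2 : (Submodule.orthogonalProjection W (x₀ - t) : E) + projPerp (Lc k) (x₀ - t) = x₀ - t :=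
      W.starProjection_add_starProjection_orthogonal (x₀ - t)
    have hdecomp : x₀ + y - t = projPerp (Lc k) (x₀ - t) + (y - s) := by
      have h3 : x₀ + y - t =
          ((Submodule.orthogonalProjection W (x₀ - t) : E) + projPerp (Lc k) (x₀ - t)) + y := by
        rw [h2]; abel
      rw [h3, hs]; abel
    have hbW : y - s ∈ W := Submodule.sub_mem _ (Submodule.subset_span hyL) hsW
    have hinner : ⟪projPerp (Lc k) (x₀ - t), y - s⟫ = 0 := by
      rw [real_inner_comm]
      exact Submodule.inner_right_of_mem_orthogonal hbW (projPerp_mem_orth _ _)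
    have hnorm : ‖x₀ + y - t‖ ^ 2 =
        ‖projPerp (Lc k) (x₀ - t)‖ ^ 2 + ‖y - s‖ ^ 2 := by
      rw [hdecomp, norm_add_sq_real, hinner]; ring
    have ha : ‖projPerp (Lc k) (x₀ - t)‖ < c + ε₁ := by
      have : projPerp (Lc k) (x₀ - t) = projPerp (Lc k) x₀ - projPerp (Lc k) t := map_sub _ _ _
      rw [this, ← norm_sub_rev, ← dist_eq_norm]
      exact hdq
    have ha2 : ‖projPerp (Lc k) (x₀ - t)‖ ^ 2 ≤ c ^ 2 + ε / 2 := by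
      have e1 : ε₁ ≤ 1 := min_le_left _ _
      have e2 : ε₁ ≤ ε / (2 * (2 * c + 1)) := min_le_right _ _
      have e3 : ε₁ * (2 * c + 1) ≤ ε / 2 := by
        rw [le_div_iff₀ (by positivity)] at e2
        nlinarith
      nlinarith [norm_nonneg (projPerp (Lc k) (x₀ - t))]
    rw [Finset.sum_range_succ]
    calc ‖x₀ + y - t‖ ^ 2 = ‖projPerp (Lc k) (x₀ - t)‖ ^ 2 + ‖y - s‖ ^ 2 := hnorm
      _ ≤ (c ^ 2 + ε / 2) + (∑ i ∈ Finset.range k, covRad (quotLat (Lc (i + 1)) (Lc i)) ^ 2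
            + ε / 2) := add_le_add ha2 hy
      _ = ∑ i ∈ Finset.range k, covRad (quotLat (Lc (i + 1)) (Lc i)) ^ 2 + c ^ 2 + ε := by ring

lemma isClosed_of_isLatticeOfRank {n : ℕ} {L : Submodule ℤ E} (hL : IsLatticeOfRank L n) :
    IsClosed (L : Set E) := by
  obtain ⟨b, hb, rfl⟩ := hL
  have hbs : LinearIndepOn ℝ id (Set.range b) := (linearIndepOn_id_range_iff hb.injective).mpr hb
  let B := Module.Basis.extend hbs
  have : Fintype _ := FiniteDimensional.fintypeBasisIndex B
  have hsub : (Submodule.span ℤ (Set.range b) : Set E) ⊆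
      (Submodule.span ℤ (Set.range B) : Set E) := by
    rw [Module.Basis.range_extend]
    exact Submodule.span_mono (hbs.subset_extend _)
  have hD : DiscreteTopology (Submodule.span ℤ (Set.range b)) := by
    have : DiscreteTopology (Submodule.span ℤ (Set.range B)) := inferInstance
    exact DiscreteTopology.of_subset this hsub
  have : DiscreteTopology (Submodule.span ℤ (Set.range b)).toAddSubgroup := hD
  exact AddSubgroup.isClosed_of_discrete (H := (Submodule.span ℤ (Set.range b)).toAddSubgroup)

/-- Let {0} = Λ₀ ⊂ Λ₁ ⊂ ⋯ ⊂ Λ_k = Λ be a filtration of a lattice Λ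
by pure sublattices, with quotient lattices Q_i = Λ_i/Λ_{i−1}. Then for every
target t ∈ span(Λ) there exists x ∈ Λ with ‖x − t‖² ≤ Σ_{i=1}^k μ(Q_i)². -/
theorem exists_close_lattice_point_of_filtration
    {E : Type*} [NormedAddCommGroup E] [InnerProductSpace ℝ E] [FiniteDimensional ℝ E]
    (n k : ℕ) (L : Submodule ℤ E) (hL : IsLatticeOfRank L n)
    (Lc : ℕ → Submodule ℤ E)
    (h0 : Lc 0 = ⊥) (hk : Lc k = L)
    (hchain : ∀ i < k, Lc i < Lc (i + 1))
    (hpure : ∀ i ≤ k, IsPureIn (Lc i) L)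
    (t : E) (ht : t ∈ latSpan L) :
    ∃ x ∈ L, ‖x - t‖ ^ 2 ≤ ∑ i ∈ Finset.range k, covRad (quotLat (Lc (i + 1)) (Lc i)) ^ 2 := by
  have hLfg : L.FG := by
    obtain ⟨b, hb, rfl⟩ := hL
    exact Submodule.fg_span (Set.finite_range b)
  -- monotonicity of the chain
  have hmon : ∀ j, j ≤ k → ∀ i, i ≤ j → Lc i ≤ Lc j := by
    intro j
    induction j with
    | zero => intro _ i hi; rw [Nat.le_zero.mp hi]
    | succ j ihm =>
      intro hj i hi
      rcases Nat.lt_or_ge i (j + 1) with h | h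
      · exact le_trans (ihm (by omega) i (by omega)) (hchain j (by omega)).le
      · have hij : i = j + 1 := by omega
        rw [hij]
  set Lc' : ℕ → Submodule ℤ E := fun i => Lc (min i k) with hLc'
  have h0' : Lc' 0 = ⊥ := by
    have : min 0 k = 0 := by omega
    simp only [hLc', this, h0]
  have hmono' : ∀ i, Lc' i ≤ Lc' (i + 1) :=
    fun i => hmon (min (i + 1) k) (min_le_right _ _) (min i k) (by omega)
  have hfg' : ∀ i, (Lc' i).FG := fun i =>
    fg_of_le_fg (by rw [← hk]; exact hmon k le_rfl _ (min_le_right _ _)) hLfg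
  have hk' : Lc' k = L := by simp only [hLc', min_self, hk]
  have ht' : t ∈ latSpan (Lc' k) := by rw [hk']; exact ht
  have hsum : ∑ i ∈ Finset.range k, covRad (quotLat (Lc' (i + 1)) (Lc' i)) ^ 2
      = ∑ i ∈ Finset.range k, covRad (quotLat (Lc (i + 1)) (Lc i)) ^ 2 := by
    refine Finset.sum_congr rfl fun i hi => ?_
    rw [Finset.mem_range] at hi
    have h1 : min (i + 1) k = i + 1 := by omega
    have h2 : min i k = i := by omega
    simp only [hLc', h1, h2]
  have hclosed : IsClosed (L : Set E) := isClosed_of_isLatticeOfRank hL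
  obtain ⟨x, hxL, hxdist⟩ := hclosed.exists_infDist_eq_dist ⟨0, L.zero_mem⟩ t
  refine ⟨x, hxL, ?_⟩
  have hxt : ‖x - t‖ = infDist t (L : Set E) := by rw [hxdist, dist_eq_norm, norm_sub_rev]
  rw [hxt]
  refine le_of_forall_pos_le_add fun ε hε => ?_
  obtain ⟨x', hx'L, hx'⟩ := aux_key k Lc' h0' hmono' hfg' t ht' ε hε
  rw [hsum] at hx'
  rw [hk'] at hx'L
  have h5 : infDist t (L : Set E) ≤ ‖x' - t‖ := by
    rw [norm_sub_rev, ← dist_eq_norm]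
    exact Metric.infDist_le_dist_of_mem hx'L
  calc infDist t (L : Set E) ^ 2 ≤ ‖x' - t‖ ^ 2 :=
        pow_le_pow_left₀ Metric.infDist_nonneg h5 2
    _ ≤ _ := hx'

end
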